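/- Let H be a numerical semigroup (an additive submonoid of ℕ containing 0 with finite complement) whose minimal generating set is {3, p, q} with 3 < p < q. Then p + q is divisible by 3, the integers r := (2p − q)/3 and s := (2q − p)/3 are positive and satisfy r < s, p = 2r + s and q = r + 2s, and the genus of H (the cardinality of ℕ \ H) equals r + s − 1. -/
import Mathlib

lemma mem_triple (x y z n : ℕ) :
    n ∈ AddSubmonoid.closure ({x, y, z} : Set ℕ) ↔ ∃ a b c : ℕ, a * x + b * y + c * z = n := by
  rw [show ({x, y, z} : Set ℕ) = {x} ∪ {y, z} by rfl, AddSubmonoid.closure_union,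
    AddSubmonoid.mem_sup]
  constructor
  · rintro ⟨u, hu, v, hv, rfl⟩
    rw [AddSubmonoid.mem_closure_singleton] at hu
    obtain ⟨a, rfl⟩ := hu
    obtain ⟨b, c, rfl⟩ := (AddSubmonoid.mem_closure_pair y z v).1 hv
    exact ⟨a, b, c, by simp [smul_eq_mul, add_assoc]⟩
  · rintro ⟨a, b, c, rfl⟩
    exact ⟨a * x, AddSubmonoid.mem_closure_singleton.2 ⟨a, by simp [smul_eq_mul]⟩,
      b * y + c * z, (AddSubmonoid.mem_closure_pair y z _).2 ⟨b, c, by simp [smul_eq_mul]⟩,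
      by ring⟩

lemma count_mod (m : ℕ) :
    ((Finset.range m).filter (fun n => n % 3 = m % 3)).card = m / 3 := by
  rw [← Finset.card_range (m / 3)]
  apply Finset.card_bij' (fun n _ => n / 3) (fun k _ => 3 * k + m % 3)
  all_goals intro a ha
  all_goals simp only [Finset.mem_filter, Finset.mem_range] at *
  all_goals omega

theorem stmt0 (H : AddSubmonoid ℕ) (hfin : {n : ℕ | n ∉ H}.Finite)
    (p q : ℕ) (h3p : 3 < p) (hpq : p < q)
    (hgen : AddSubmonoid.closure ({3, p, q} : Set ℕ) = H)
    (hmin : ∀ S : Set ℕ, S ⊂ ({3, p, q} : Set ℕ) → AddSubmonoid.closure S ≠ H) :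
    3 ∣ (p + q) ∧
    ∃ r s : ℕ, 0 < r ∧ r < s ∧ 3 * r = 2 * p - q ∧ 3 * s = 2 * q - p ∧
      p = 2 * r + s ∧ q = r + 2 * s ∧ {n : ℕ | n ∉ H}.ncard = r + s - 1 := by
  have hmem : ∀ n, n ∈ H ↔ ∃ a b c : ℕ, a * 3 + b * p + c * q = n := by
    intro n; rw [← hgen]; exact mem_triple 3 p q n
  -- if p is in the closure of {3, q}, contradiction
  have hsubpq : ∀ S : Set ℕ, S ⊂ ({3, p, q} : Set ℕ) → ({3, p, q} : Set ℕ) ⊆ ↑(AddSubmonoid.closure S) → False := by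
    intro S hS hsub
    apply hmin S hS
    rw [← hgen]
    exact le_antisymm (AddSubmonoid.closure_mono hS.subset)
      ((AddSubmonoid.closure_le).2 hsub)
  have hq3 : q ∉ AddSubmonoid.closure ({3, p} : Set ℕ) := by
    intro hq
    apply hsubpq {3, p}
    · constructor
      · intro x hx; simp only [Set.mem_insert_iff, Set.mem_singleton_iff] at hx ⊢; tauto
      · intro h
        have := h (show q ∈ ({3,p,q} : Set ℕ) by simp)
        simp only [Set.mem_insert_iff, Set.mem_singleton_iff] at this
        omega
    · intro x hx
      rcases hx with rfl | rfl | rfl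
      · exact AddSubmonoid.subset_closure (by simp)
      · exact AddSubmonoid.subset_closure (by simp)
      · exact hq
  have hp3 : p ∉ AddSubmonoid.closure ({3, q} : Set ℕ) := by
    intro hp
    apply hsubpq {3, q}
    · constructor
      · intro x hx; simp only [Set.mem_insert_iff, Set.mem_singleton_iff] at hx ⊢; tauto
      · intro h
        have := h (show p ∈ ({3,p,q} : Set ℕ) by simp)
        simp only [Set.mem_insert_iff, Set.mem_singleton_iff] at this
        omega
    · intro x hx
      rcases hx with rfl | rfl | rfl
      · exact AddSubmonoid.subset_closure (by simp)
      · exact hp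
      · exact AddSubmonoid.subset_closure (by simp)
  have pairmem : ∀ x y n : ℕ, (∃ a b : ℕ, a * x + b * y = n) → n ∈ AddSubmonoid.closure ({x, y} : Set ℕ) := by
    intro x y n ⟨a, b, hab⟩
    exact (AddSubmonoid.mem_closure_pair x y n).2 ⟨a, b, by simpa [smul_eq_mul] using hab⟩
  -- p % 3 ≠ 0
  have hpmod : p % 3 ≠ 0 := by
    intro h
    exact hp3 (pairmem 3 q p ⟨p / 3, 0, by omega⟩)
  have hqmod : q % 3 ≠ 0 := by
    intro h
    exact hq3 (pairmem 3 p q ⟨q / 3, 0, by omega⟩)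
  have hne : p % 3 ≠ q % 3 := by
    intro h
    exact hq3 (pairmem 3 p q ⟨(q - p) / 3, 1, by omega⟩)
  have hsum : p % 3 + q % 3 = 3 := by omega
  have hdvd : 3 ∣ p + q := by omega
  -- q < 2p
  have hq2p : q < 2 * p := by
    by_contra h
    push_neg at h
    have h2 : (2 * p) % 3 = q % 3 := by omega
    exact hq3 (pairmem 3 p q ⟨(q - 2 * p) / 3, 2, by omega⟩)
  -- complement characterization
  have hcompl : ∀ n, n ∉ H ↔ (n < p ∧ n % 3 = p % 3) ∨ (n < q ∧ n % 3 = q % 3) := by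
    intro n
    constructor
    · intro hn
      by_contra h
      push_neg at h
      apply hn
      rw [hmem]
      have h3 : n % 3 = 0 ∨ n % 3 = p % 3 ∨ n % 3 = q % 3 := by omega
      rcases h3 with h3 | h3 | h3
      · exact ⟨n / 3, 0, 0, by omega⟩
      · have : p ≤ n := by by_contra hc; push_neg at hc; exact (h.1 hc h3).elim
        exact ⟨(n - p) / 3, 1, 0, by omega⟩
      · have : q ≤ n := by by_contra hc; push_neg at hc; exact (h.2 hc h3).elim
        exact ⟨(n - q) / 3, 0, 1, by omega⟩
    · intro h hn
      rw [hmem] at hn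
      obtain ⟨a, b, c, habc⟩ := hn
      rcases h with ⟨hlt, hm⟩ | ⟨hlt, hm⟩
      · -- n < p, n % 3 = p % 3 ≠ 0; but b = c = 0 forces n % 3 = 0
        have hb : b = 0 := by
          rcases Nat.eq_zero_or_pos b with h | h
          · exact h
          · exfalso; have : p ≤ b * p := Nat.le_mul_of_pos_left p h; omega
        have hc : c = 0 := by
          rcases Nat.eq_zero_or_pos c with h | h
          · exact h
          · exfalso; have : q ≤ c * q := Nat.le_mul_of_pos_left q h; omega
        subst hb; subst hc; omega
      · -- n < q, n % 3 = q % 3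
        have hc : c = 0 := by
          rcases Nat.eq_zero_or_pos c with h | h
          · exact h
          · exfalso; have : q ≤ c * q := Nat.le_mul_of_pos_left q h; omega
        subst hc
        -- n = 3a + b p, cases on b
        rcases Nat.lt_or_ge b 2 with hb | hb
        · interval_cases b <;> omega
        · have : 2 * p ≤ b * p := Nat.mul_le_mul_right p hb
          omega
  -- the complement as a finset
  set F : Finset ℕ := ((Finset.range p).filter (fun n => n % 3 = p % 3)) ∪
      ((Finset.range q).filter (fun n => n % 3 = q % 3)) with hF
  have hset : {n : ℕ | n ∉ H} = ↑F := by
    ext n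
    simp only [Set.mem_setOf_eq, hF, Finset.coe_union, Set.mem_union, Finset.coe_filter,
      Finset.mem_range, Set.mem_setOf_eq]
    rw [hcompl]
  have hdisj : Disjoint ((Finset.range p).filter (fun n => n % 3 = p % 3))
      ((Finset.range q).filter (fun n => n % 3 = q % 3)) := by
    rw [Finset.disjoint_left]
    intro a ha hb
    simp only [Finset.mem_filter, Finset.mem_range] at ha hb
    omega
  have hcard : F.card = p / 3 + q / 3 := by
    rw [hF, Finset.card_union_of_disjoint hdisj, count_mod, count_mod]
  refine ⟨hdvd, (2 * p - q) / 3, (2 * q - p) / 3, by omega, by omega, by omega, by omega,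
    by omega, by omega, ?_⟩
  rw [hset, Set.ncard_coe_finset, hcard]
  omega
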